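/- Let n be a positive integer, let α > 0, let p_1, …, p_n ∈ [0,1], and let q_1, …, q_n ≥ 0 be real numbers with q_i ≤ α · p_i for every i. Suppose Q := ∑_{i=1}^{n} q_i > 0, and set δ := (1 − exp(−Q/α)) / Q. Then there exists a probability distribution w on the permutations π of {1, …, n} (i.e. w(π) ≥ 0 and ∑_π w(π) = 1) such that for every index i, ∑_π w(π) · p_i · ∏_{j : π(j) < π(i)} (1 − p_j) ≥ δ · q_i. -/

import Mathlib

open Finset Pointwise

private lemma perm_inv_apply_self {α : Type*} (f : Equiv.Perm α) (x : α) : f⁻¹ (f x) = x :=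
  Equiv.symm_apply_apply f x

private lemma perm_apply_inv_self {α : Type*} (f : Equiv.Perm α) (x : α) : f (f⁻¹ x) = x :=
  Equiv.apply_symm_apply f x

/-- Abel-summation style inequality. -/
private lemma abel_aux (g h : ℕ → ℝ) :
    ∀ n : ℕ, (∀ k l : ℕ, k ≤ l → l ≤ n → g l ≤ g k) → (∀ k, k ≤ n → 0 ≤ g k) →
      (∀ k, k ≤ n → 0 ≤ h k) → h 0 = 0 →
      g n * h n ≤ ∑ k ∈ range n, g k * (h (k + 1) - h k) := by
  intro n
  induction n with
  | zero => intro _ _ _ h0; simp [h0]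
  | succ m ih =>
    intro hg hg0 hh h0
    have IH := ih (fun k l hkl hl => hg k l hkl (hl.trans m.le_succ))
      (fun k hk => hg0 k (hk.trans m.le_succ)) (fun k hk => hh k (hk.trans m.le_succ)) h0
    rw [Finset.sum_range_succ]
    have h1 : g (m + 1) * h (m + 1) ≤ g m * h (m + 1) :=
      mul_le_mul_of_nonneg_right (hg m (m + 1) m.le_succ le_rfl) (hh (m + 1) le_rfl)
    have h2 : g m * h (m + 1) = g m * h m + g m * (h (m + 1) - h m) := by ring
    linarith

/-- The dual inequality: for every nonnegative weight vector `y` there is a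
permutation (sorting `y` in decreasing order) achieving the guarantee on average. -/
private lemma dual_bound (n : ℕ) (α : ℝ) (hα : 0 < α) (p q : Fin n → ℝ)
    (hp : ∀ i, p i ∈ Set.Icc (0 : ℝ) 1) (hq : ∀ i, 0 ≤ q i)
    (hqp : ∀ i, q i ≤ α * p i) (hQ : 0 < ∑ i, q i)
    (y : Fin n → ℝ) (hy : ∀ i, 0 ≤ y i) :
    ∃ π : Equiv.Perm (Fin n),
      (1 - Real.exp (-(∑ j, q j) / α)) / (∑ j, q j) * (∑ i, y i * q i)
        ≤ ∑ i, y i * (p i * ∏ j ∈ Finset.univ.filter (fun j => π j < π i), (1 - p j)) := by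
  classical
  set Q := ∑ j, q j with hQdef
  set δ := (1 - Real.exp (-Q / α)) / Q with hδdef
  set s := Tuple.sort (fun k => -(y k)) with hsdef
  refine ⟨s⁻¹, ?_⟩
  set p' : ℕ → ℝ := fun k => if h : k < n then p (s ⟨k, h⟩) else 0 with hp'def
  set q' : ℕ → ℝ := fun k => if h : k < n then q (s ⟨k, h⟩) else 0 with hq'def
  set g : ℕ → ℝ := fun k => if h : k < n then y (s ⟨k, h⟩) else 0 with hgdef
  have hp'0 : ∀ k, 0 ≤ p' k := by
    intro k; rw [hp'def]; dsimp only; split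
    · exact (hp _).1
    · exact le_rfl
  have hp'1 : ∀ k, p' k ≤ 1 := by
    intro k; rw [hp'def]; dsimp only; split
    · exact (hp _).2
    · exact zero_le_one
  have hq'0 : ∀ k, 0 ≤ q' k := by
    intro k; rw [hq'def]; dsimp only; split
    · exact hq _
    · exact le_rfl
  have hq'p : ∀ k, q' k ≤ α * p' k := by
    intro k; rw [hq'def, hp'def]; dsimp only; split
    · exact hqp _
    · simp
  have hg0 : ∀ k, 0 ≤ g k := by
    intro k; rw [hgdef]; dsimp only; split
    · exact hy _
    · exact le_rfl
  have hganti : ∀ k l : ℕ, k ≤ l → l ≤ n → g l ≤ g k := by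
    intro k l hkl hln
    rw [hgdef]; dsimp only
    by_cases hl : l < n
    · have hk : k < n := lt_of_le_of_lt hkl hl
      rw [dif_pos hl, dif_pos hk]
      have hmono := Tuple.monotone_sort (fun k => -(y k))
      have := hmono (show (⟨k, hk⟩ : Fin n) ≤ ⟨l, hl⟩ from hkl)
      simp only [Function.comp_apply] at this
      -- this : -(y (s ⟨k,hk⟩)) ≤ -(y (s ⟨l,hl⟩))
      linarith
    · rw [dif_neg hl]
      split
      · exact hy _
      · exact le_rfl
  -- total sum of q'
  have hsumq : ∑ l ∈ range n, q' l = Q := by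
    rw [← Fin.sum_univ_eq_sum_range]
    rw [hQdef, ← Equiv.sum_comp s q]
    refine Finset.sum_congr rfl fun i _ => ?_
    rw [hq'def]; dsimp only
    rw [dif_pos i.isLt]
  -- prefix inequality
  have hpre : ∀ k, k ≤ n → δ * (∑ l ∈ range k, q' l) ≤ 1 - ∏ l ∈ range k, (1 - p' l) := by
    intro k hk
    set x := ∑ l ∈ range k, q' l with hxdef
    have hx0 : 0 ≤ x := Finset.sum_nonneg fun l _ => hq'0 l
    have hxQ : x ≤ Q := by
      rw [← hsumq, hxdef]
      exact Finset.sum_le_sum_of_subset_of_nonneg (Finset.range_subset_range.2 hk)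
        (fun i _ _ => hq'0 i)
    have hprod : ∏ l ∈ range k, (1 - p' l) ≤ Real.exp (-(x / α)) := by
      calc ∏ l ∈ range k, (1 - p' l) ≤ ∏ l ∈ range k, Real.exp (-(p' l)) := by
            refine Finset.prod_le_prod (fun l _ => by linarith [hp'1 l]) (fun l _ => ?_)
            have := Real.add_one_le_exp (-(p' l)); linarith
        _ = Real.exp (∑ l ∈ range k, -(p' l)) := (Real.exp_sum _ _).symm
        _ ≤ Real.exp (-(x / α)) := by
            refine Real.exp_le_exp.2 ?_
            have hxs : x ≤ α * ∑ l ∈ range k, p' l := by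
              rw [hxdef, Finset.mul_sum]
              exact Finset.sum_le_sum fun l _ => hq'p l
            rw [Finset.sum_neg_distrib]
            have : x / α ≤ ∑ l ∈ range k, p' l := by
              rw [div_le_iff₀ hα]
              calc x ≤ α * ∑ l ∈ range k, p' l := hxs
                _ = (∑ l ∈ range k, p' l) * α := mul_comm _ _
            linarith
    have hQ0 : (0 : ℝ) < Q := hQ
    have hconv : Real.exp (-(x / α)) ≤ 1 - δ * x := by
      set t := x / Q with htdef
      have ht0 : 0 ≤ t := div_nonneg hx0 hQ0.le
      have ht1 : t ≤ 1 := (div_le_one hQ0).2 hxQ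
      have hcx := convexOn_exp.2 (Set.mem_univ (-(Q / α))) (Set.mem_univ (0 : ℝ))
        ht0 (by linarith : (0:ℝ) ≤ 1 - t) (by ring)
      have harg : t • (-(Q / α)) + (1 - t) • (0 : ℝ) = -(x / α) := by
        simp only [smul_eq_mul, mul_zero, add_zero]
        rw [htdef]
        field_simp
      rw [harg] at hcx
      simp only [smul_eq_mul, Real.exp_zero, mul_one] at hcx
      have hδx : δ * x = t * (1 - Real.exp (-Q / α)) := by
        rw [hδdef, htdef]; field_simp
      have : -Q / α = -(Q / α) := by ring
      rw [hδx, this]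
      linarith
    linarith
  -- Abel summation
  set B : ℕ → ℝ := fun k => 1 - ∏ l ∈ range k, (1 - p' l) with hBdef
  set C : ℕ → ℝ := fun k => δ * ∑ l ∈ range k, q' l with hCdef
  set h : ℕ → ℝ := fun k => B k - C k with hhdef
  have hh0 : h 0 = 0 := by simp [hhdef, hBdef, hCdef]
  have hhnn : ∀ k, k ≤ n → 0 ≤ h k := by
    intro k hk
    have := hpre k hk
    simp only [hhdef, hBdef, hCdef]
    linarith
  have key := abel_aux g h n hganti (fun k _ => hg0 k) hhnn hh0
  have hkey0 : 0 ≤ ∑ k ∈ range n, g k * (h (k + 1) - h k) :=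
    le_trans (mul_nonneg (hg0 n) (hhnn n le_rfl)) key
  have hdelta : ∀ k : ℕ, h (k + 1) - h k
      = g k * 0 + (p' k * ∏ l ∈ range k, (1 - p' l) - δ * q' k) := by
    intro k
    simp only [hhdef, hBdef, hCdef]
    rw [Finset.prod_range_succ, Finset.sum_range_succ]
    ring
  have hmain : δ * ∑ k ∈ range n, g k * q' k
      ≤ ∑ k ∈ range n, g k * (p' k * ∏ l ∈ range k, (1 - p' l)) := by
    have hexp : ∑ k ∈ range n, g k * (h (k + 1) - h k)
        = (∑ k ∈ range n, g k * (p' k * ∏ l ∈ range k, (1 - p' l)))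
          - δ * ∑ k ∈ range n, g k * q' k := by
      rw [Finset.mul_sum, ← Finset.sum_sub_distrib]
      refine Finset.sum_congr rfl fun k _ => ?_
      rw [hdelta k]; ring
    linarith [hexp ▸ hkey0]
  -- convert both sides
  have hLHS : ∑ i, y i * q i = ∑ k ∈ range n, g k * q' k := by
    rw [← Fin.sum_univ_eq_sum_range (fun k => g k * q' k) n]
    rw [← Equiv.sum_comp s (fun i => y i * q i)]
    refine Finset.sum_congr rfl fun i _ => ?_
    rw [hgdef, hq'def]; dsimp only
    rw [dif_pos i.isLt, dif_pos i.isLt]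
  have hprodeq : ∀ k : Fin n,
      ∏ j ∈ Finset.univ.filter (fun j => s⁻¹ j < s⁻¹ (s k)), (1 - p j)
        = ∏ l ∈ range (k : ℕ), (1 - p' l) := by
    intro k
    rw [perm_inv_apply_self]
    refine Finset.prod_bij' (i := fun j _ => ((s⁻¹ j : Fin n) : ℕ))
      (j := fun l hl => s ⟨l, lt_trans (Finset.mem_range.1 hl) k.isLt⟩)
      ?_ ?_ ?_ ?_ ?_
    · intro a ha
      rw [Finset.mem_filter] at ha
      exact Finset.mem_range.2 ha.2
    · intro l hl
      rw [Finset.mem_filter]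
      refine ⟨Finset.mem_univ _, ?_⟩
      rw [perm_inv_apply_self]
      exact Finset.mem_range.1 hl
    · intro a ha
      rw [show (⟨((s⁻¹ a : Fin n) : ℕ), _⟩ : Fin n) = s⁻¹ a from Fin.eta _ _]
      exact perm_apply_inv_self s a
    · intro l hl
      rw [perm_inv_apply_self]
    · intro a ha
      rw [hp'def]; dsimp only
      rw [dif_pos (s⁻¹ a).isLt]
      rw [show (⟨((s⁻¹ a : Fin n) : ℕ), _⟩ : Fin n) = s⁻¹ a from Fin.eta _ _]
      rw [perm_apply_inv_self s a]
  have hRHS : ∑ i, y i * (p i * ∏ j ∈ Finset.univ.filter (fun j => s⁻¹ j < s⁻¹ i), (1 - p j))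
      = ∑ k ∈ range n, g k * (p' k * ∏ l ∈ range k, (1 - p' l)) := by
    rw [← Fin.sum_univ_eq_sum_range (fun k => g k * (p' k * ∏ l ∈ range k, (1 - p' l))) n]
    rw [← Equiv.sum_comp s
      (fun i => y i * (p i * ∏ j ∈ Finset.univ.filter (fun j => s⁻¹ j < s⁻¹ i), (1 - p j)))]
    refine Finset.sum_congr rfl fun k _ => ?_
    rw [hprodeq k]
    rw [hgdef, hp'def]; dsimp only
    rw [dif_pos k.isLt, dif_pos k.isLt]
  rw [hLHS, hRHS]
  exact hmain

/-- LP duality via Hahn–Banach separation: from the dual inequality we get a primal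
distribution. -/
private lemma primal_of_dual {ι κ : Type*} [Fintype ι] [Fintype κ] [Nonempty κ]
    [DecidableEq ι] [DecidableEq κ]
    (A : κ → ι → ℝ) (b : ι → ℝ)
    (hdual : ∀ y : ι → ℝ, (∀ i, 0 ≤ y i) → ∃ k, ∑ i, y i * b i ≤ ∑ i, y i * A k i) :
    ∃ w : κ → ℝ, (∀ k, 0 ≤ w k) ∧ (∑ k, w k = 1) ∧ ∀ i, b i ≤ ∑ k, w k * A k i := by
  classical
  set W : (κ → ℝ) →ₗ[ℝ] (ι → ℝ) :=
    { toFun := fun w i => ∑ k, w k * A k i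
      map_add' := fun a b => funext fun i => by
        simp [Pi.add_apply, add_mul, Finset.sum_add_distrib]
      map_smul' := fun r a => funext fun i => by
        simp [Finset.mul_sum, mul_assoc] } with hWdef
  have hWapp : ∀ (w : κ → ℝ) (i : ι), W w i = ∑ k, w k * A k i := fun _ _ => rfl
  set S : Set (κ → ℝ) := stdSimplex ℝ κ with hSdef
  set N : Set (ι → ℝ) := {z | ∀ i, z i ≤ 0} with hNdef
  set D : Set (ι → ℝ) := (W '' S) + N with hDdef
  -- point masses
  have hmemS : ∀ k : κ, (fun k' => if k' = k then (1 : ℝ) else 0) ∈ S := by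
    intro k
    constructor
    · intro k'; dsimp only; split <;> norm_num
    · simp
  have h0N : (0 : ι → ℝ) ∈ N := fun i => le_rfl
  have hWD : ∀ w ∈ S, W w ∈ D := by
    intro w hw
    have := Set.add_mem_add (Set.mem_image_of_mem W hw) h0N
    simpa using this
  have hWpoint : ∀ k : κ, W (fun k' => if k' = k then (1 : ℝ) else 0) = A k := by
    intro k
    funext i
    rw [hWapp]
    rw [Finset.sum_eq_single k]
    · simp
    · intro k' _ hk'; simp [hk']
    · intro hk; exact absurd (Finset.mem_univ k) hk
  have hbD : b ∈ D := by
    by_contra hb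
    have hKc : IsCompact (W '' S) :=
      (isCompact_stdSimplex ℝ κ).image W.continuous_of_finiteDimensional
    have hKconv : Convex ℝ (W '' S) := (convex_stdSimplex ℝ κ).linear_image W
    have hNc : IsClosed N := by
      have : N = ⋂ i, {z : ι → ℝ | z i ≤ 0} := by
        ext z; simp [hNdef, Set.mem_iInter]
      rw [this]
      exact isClosed_iInter fun i => isClosed_le (continuous_apply i) continuous_const
    have hNconv : Convex ℝ N := by
      intro z1 h1 z2 h2 a c ha hc hac
      intro i
      have hz1 := h1 i
      have hz2 := h2 i
      simp only [Pi.add_apply, Pi.smul_apply, smul_eq_mul]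
      nlinarith
    have hDc : IsClosed D := hNc.add_left_of_isCompact hKc
    have hDconv : Convex ℝ D := hKconv.add hNconv
    obtain ⟨f, u, hfD, hub⟩ := geometric_hahn_banach_closed_point hDconv hDc hb
    set v : ι → ι → ℝ := fun i => fun j => if i = j then (1 : ℝ) else 0 with hvdef
    set y : ι → ℝ := fun i => f (v i) with hydef
    have hfx : ∀ x : ι → ℝ, f x = ∑ i, x i * y i := by
      intro x
      conv_lhs => rw [pi_eq_sum_univ x, map_sum]
      refine Finset.sum_congr rfl fun i _ => ?_
      rw [map_smul]
      simp [hydef, hvdef, smul_eq_mul]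
    -- choose a base point
    obtain ⟨k0⟩ := ‹Nonempty κ›
    set w0 : κ → ℝ := fun k' => if k' = k0 then (1 : ℝ) else 0 with hw0def
    have hd0 : f (W w0) < u := hfD _ (hWD w0 (hmemS k0))
    have hy0 : ∀ i, 0 ≤ y i := by
      intro i
      by_contra hyi
      push_neg at hyi
      set t : ℝ := (u - f (W w0) + 1) / (-(y i)) with htdef
      have ht : 0 < t := div_pos (by linarith) (by linarith)
      have hzN : (-t) • v i ∈ N := by
        intro j
        simp only [Pi.smul_apply, smul_eq_mul, hvdef]
        split <;> nlinarith
      have hmem : W w0 + (-t) • v i ∈ D :=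
        Set.add_mem_add (Set.mem_image_of_mem W (hmemS k0)) hzN
      have hlt := hfD _ hmem
      rw [map_add, map_smul] at hlt
      have hsm : (-t) • f (v i) = (-t) * y i := smul_eq_mul ..
      rw [hsm] at hlt
      have hyne : -y i ≠ 0 := ne_of_gt (by linarith)
      have he : (-t) * y i = t * (-y i) := by ring
      have hval : t * (-y i) = u - f (W w0) + 1 := by
        rw [htdef, div_mul_cancel₀ _ hyne]
      rw [he, hval] at hlt
      linarith
    obtain ⟨k, hk⟩ := hdual y hy0
    have h1 : f b = ∑ i, b i * y i := hfx b
    have h3 : f (A k) < u := by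
      rw [← hWpoint k]
      exact hfD _ (hWD _ (hmemS k))
    have h4 : f (A k) = ∑ i, A k i * y i := hfx (A k)
    have h5 : ∑ i, b i * y i = ∑ i, y i * b i :=
      Finset.sum_congr rfl fun i _ => mul_comm _ _
    have h6 : ∑ i, A k i * y i = ∑ i, y i * A k i :=
      Finset.sum_congr rfl fun i _ => mul_comm _ _
    rw [h1, h5] at hub
    rw [h4, h6] at h3
    linarith
  rw [hDdef] at hbD
  rw [Set.mem_add] at hbD
  obtain ⟨x, hx, z, hz, hxz⟩ := hbD
  obtain ⟨w, hwS, rfl⟩ := hx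
  refine ⟨w, hwS.1, hwS.2, fun i => ?_⟩
  have hbi : W w i + z i = b i := by
    have := congrFun hxz i
    simpa using this
  rw [← hWapp]
  linarith [hz i]

/-- **Corollary 1.** If each target `q i` is at most `α` times the
corresponding probability `p i`, then a randomized scanning order guarantees
that each event `i` is the earliest occurring one with probability at least
`δ · q i`, where `δ = (1 - exp (-(∑ q)/α)) / (∑ q)`. -/
theorem stmt_6 (n : ℕ) (hn : 0 < n) (α : ℝ) (hα : 0 < α) (p q : Fin n → ℝ)
    (hp : ∀ i, p i ∈ Set.Icc (0 : ℝ) 1) (hq : ∀ i, 0 ≤ q i)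
    (hqp : ∀ i, q i ≤ α * p i) (hQ : 0 < ∑ i, q i) :
    ∃ w : Equiv.Perm (Fin n) → ℝ,
      (∀ π, 0 ≤ w π) ∧ (∑ π : Equiv.Perm (Fin n), w π = 1) ∧
      ∀ i : Fin n,
        (1 - Real.exp (-(∑ j, q j) / α)) / (∑ j, q j) * q i
          ≤ ∑ π : Equiv.Perm (Fin n),
              w π * (p i * ∏ j ∈ Finset.univ.filter (fun j => π j < π i), (1 - p j)) := by
  classical
  set δ := (1 - Real.exp (-(∑ j, q j) / α)) / (∑ j, q j) with hδdef
  have := primal_of_dual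
    (A := fun (π : Equiv.Perm (Fin n)) (i : Fin n) =>
      p i * ∏ j ∈ Finset.univ.filter (fun j => π j < π i), (1 - p j))
    (b := fun i => δ * q i)
    (hdual := by
      intro y hy
      obtain ⟨π, hπ⟩ := dual_bound n α hα p q hp hq hqp hQ y hy
      refine ⟨π, ?_⟩
      have : ∑ i, y i * (δ * q i) = δ * ∑ i, y i * q i := by
        rw [Finset.mul_sum]
        exact Finset.sum_congr rfl fun i _ => by ring
      rw [this]
      exact hπ)
  obtain ⟨w, hw0, hw1, hwb⟩ := this
  exact ⟨w, hw0, hw1, hwb⟩
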